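/- Let M be a closed oriented surface and g: M → C a smooth function expressed in local conformal coordinates, such that in each chart ∂̄g = (H/2)(|ψ2|^2-|ψ1|^2)(|ψ1|^2+|ψ2|^2)/(|ψ1|^2+|ψ2|^2) + (i/4)(|ψ2|^4 - |ψ1|^4) where g·dz is a globally defined 1-form. Then ∫_M [(H/2)(|ψ2|^2-|ψ1|^2)(1) + (i/4)(|ψ2|^4-|ψ1|^4)] (i dz∧dz̄)/2 = 0; in particular, taking imaginary parts, ∫_M (|ψ2|^4 - |ψ1|^4) (i dz∧dz̄)/2 = 0, i.e. the integral over M of the third component ⟨f^{-1}(N), e3⟩ of the left-translated unit normal against the induced area measure vanishes. -/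

import Mathlib

open Complex MeasureTheory

/-- The Wirtinger derivative `∂̄ = (∂/∂x + i ∂/∂y)/2`. -/
noncomputable def wDbar (f : ℂ → ℂ) (z : ℂ) : ℂ :=
  (fderiv ℝ f z 1 + I * fderiv ℝ f z I) / 2

lemma sq_integrableOn {h : ℂ → ℂ} (hc : Continuous h) :
    IntegrableOn (fun p : ℝ × ℝ => h (p.1 + p.2 * I))
      (Set.Ioo (0:ℝ) 1 ×ˢ Set.Ioo (0:ℝ) 1) := by
  have hcont : Continuous fun p : ℝ × ℝ => h (p.1 + p.2 * I) := by
    apply hc.comp; continuity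
  have hcomp : IsCompact (Set.Icc (0:ℝ) 1 ×ˢ Set.Icc (0:ℝ) 1) :=
    isCompact_Icc.prod isCompact_Icc
  exact (hcont.continuousOn.integrableOn_compact hcomp).mono_set
    (Set.prod_mono Set.Ioo_subset_Icc_self Set.Ioo_subset_Icc_self)

/-- Set integral over the open unit square in `ℂ` as an iterated interval integral. -/
lemma sq_integral (h : ℂ → ℂ) (hc : Continuous h) :
    (∫ z in {z : ℂ | z.re ∈ Set.Ioo (0 : ℝ) 1 ∧ z.im ∈ Set.Ioo (0 : ℝ) 1}, h z)
      = ∫ x in (0:ℝ)..1, ∫ y in (0:ℝ)..1, h (x + y * I) := by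
  have hmp : MeasurePreserving Complex.measurableEquivRealProd :=
    Complex.volume_preserving_equiv_real_prod
  have key := hmp.setIntegral_preimage_emb
    Complex.measurableEquivRealProd.measurableEmbedding
    (fun p : ℝ × ℝ => h (p.1 + p.2 * I)) (Set.Ioo (0:ℝ) 1 ×ˢ Set.Ioo (0:ℝ) 1)
  have hpre : Complex.measurableEquivRealProd ⁻¹' (Set.Ioo (0:ℝ) 1 ×ˢ Set.Ioo (0:ℝ) 1)
      = {z : ℂ | z.re ∈ Set.Ioo (0 : ℝ) 1 ∧ z.im ∈ Set.Ioo (0 : ℝ) 1} := by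
    ext z
    simp [Complex.measurableEquivRealProd_apply, Set.mem_prod]
  rw [hpre] at key
  have hfun : ∀ z : ℂ,
      (fun p : ℝ × ℝ => h (p.1 + p.2 * I)) (Complex.measurableEquivRealProd z) = h z := by
    intro z
    simp [Complex.measurableEquivRealProd_apply, Complex.re_add_im]
  calc (∫ z in {z : ℂ | z.re ∈ Set.Ioo (0 : ℝ) 1 ∧ z.im ∈ Set.Ioo (0 : ℝ) 1}, h z)
      = ∫ p in Set.Ioo (0:ℝ) 1 ×ˢ Set.Ioo (0:ℝ) 1, h (p.1 + p.2 * I) := by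
        rw [← key]
        refine setIntegral_congr_fun ?_ (fun z _ => (hfun z).symm)
        rw [← hpre]
        exact Complex.measurableEquivRealProd.measurable (measurableSet_Ioo.prod measurableSet_Ioo)
    _ = ∫ x in Set.Ioo (0:ℝ) 1, ∫ y in Set.Ioo (0:ℝ) 1, h (x + y * I) := by
        exact setIntegral_prod _ (sq_integrableOn hc)
    _ = ∫ x in (0:ℝ)..1, ∫ y in (0:ℝ)..1, h (x + y * I) := by
        rw [intervalIntegral.integral_of_le zero_le_one, integral_Ioc_eq_integral_Ioo]
        refine setIntegral_congr_fun measurableSet_Ioo fun x _ => ?_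
        rw [intervalIntegral.integral_of_le zero_le_one, integral_Ioc_eq_integral_Ioo]

lemma isCompact_reProdIm {s t : Set ℝ} (hs : IsCompact s) (ht : IsCompact t) :
    IsCompact (s ×ℂ t) := by
  have h : s ×ℂ t = Complex.equivRealProdCLM.toHomeomorph ⁻¹' (s ×ˢ t) := by
    ext z
    rw [Complex.mem_reProdIm]
    exact Iff.rfl
  rw [h]
  exact Complex.equivRealProdCLM.toHomeomorph.isCompact_preimage.mpr (hs.prod ht)

/-- Stokes-type vanishing for a closed surface in Nil (modelled on a torus `ℂ/(ℤ+iℤ)`,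
i.e. on doubly periodic data on `ℂ`): if `g = ψ1·conj ψ2` (so that `g·dz` is a globally
defined 1-form on the torus) satisfies
`∂̄ g = (H/2)(|ψ2|²-|ψ1|²)(|ψ1|²+|ψ2|²) + (i/4)(|ψ2|⁴-|ψ1|⁴)`,
then the integral of `∂̄ g` over the fundamental domain vanishes; in particular,
taking imaginary parts, `∫ (|ψ2|⁴ - |ψ1|⁴) = 0`, i.e. the integral over the surface of
the third component `⟨f⁻¹(N), e₃⟩` of the left-translated unit normal against the induced
area measure vanishes. -/
theorem nil_normal_component_integral_vanishes
    (ψ1 ψ2 : ℂ → ℂ) (H : ℂ → ℝ)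
    (hψ1 : ContDiff ℝ 1 ψ1) (hψ2 : ContDiff ℝ 1 ψ2) (hH : Continuous H)
    (hper1 : ∀ z, ψ1 (z + 1) = ψ1 z) (hper1' : ∀ z, ψ1 (z + I) = ψ1 z)
    (hper2 : ∀ z, ψ2 (z + 1) = ψ2 z) (hper2' : ∀ z, ψ2 (z + I) = ψ2 z)
    (g : ℂ → ℂ) (hg : ∀ z, g z = ψ1 z * (starRingEnd ℂ) (ψ2 z))
    (hdbar : ∀ z, wDbar g z =
      ((H z / 2) * (‖ψ2 z‖ ^ 2 - ‖ψ1 z‖ ^ 2) *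
        (‖ψ1 z‖ ^ 2 + ‖ψ2 z‖ ^ 2) : ℝ) +
      I * ((1 / 4) * (‖ψ2 z‖ ^ 4 - ‖ψ1 z‖ ^ 4 : ℝ) : ℂ))
    (F : Set ℂ) (hF : F = {z : ℂ | z.re ∈ Set.Ioo (0 : ℝ) 1 ∧ z.im ∈ Set.Ioo (0 : ℝ) 1}) :
    (∫ z in F, wDbar g z) = 0 ∧
    (∫ z in F, (‖ψ2 z‖ ^ 4 - ‖ψ1 z‖ ^ 4)) = 0 := by
  have hgeq : g = fun z => ψ1 z * (starRingEnd ℂ) (ψ2 z) := funext hg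
  -- g is C¹
  have hgC1 : ContDiff ℝ 1 g := by
    rw [hgeq]
    exact hψ1.mul (Complex.conjCLE.contDiff.comp hψ2)
  have hgd : ∀ z, HasFDerivAt g (fderiv ℝ g z) z := fun z =>
    (hgC1.differentiable one_ne_zero z).hasFDerivAt
  -- periodicity of g
  have gper1 : ∀ z, g (z + 1) = g z := by
    intro z; rw [hgeq]; simp only [hper1 z, hper2 z]
  have gperI : ∀ z, g (z + I) = g z := by
    intro z; rw [hgeq]; simp only [hper1' z, hper2' z]
  -- continuity of wDbar g via hdbar
  have hwc : Continuous (wDbar g) := by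
    have : wDbar g = fun z =>
        (((H z / 2) * (‖ψ2 z‖ ^ 2 - ‖ψ1 z‖ ^ 2) *
          (‖ψ1 z‖ ^ 2 + ‖ψ2 z‖ ^ 2) : ℝ) : ℂ) +
        I * ((1 / 4) * (‖ψ2 z‖ ^ 4 - ‖ψ1 z‖ ^ 4 : ℝ) : ℂ) :=
      funext hdbar
    rw [this]
    have h1 : Continuous fun z => ‖ψ1 z‖ := continuous_norm.comp hψ1.continuous
    have h2 : Continuous fun z => ‖ψ2 z‖ := continuous_norm.comp hψ2.continuous
    fun_prop
  -- apply the rectangle Stokes/Green theorem to I • g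
  set f' : ℂ → ℂ →L[ℝ] ℂ := fun z => I • fderiv ℝ g z with hf'
  have hfderiv : ∀ z : ℂ, HasFDerivAt (fun w => I * g w) (f' z) z := fun z =>
    (hgd z).const_mul I
  have hint_eq : (fun z => I • f' z 1 - f' z I) = fun z => (-2 : ℂ) * wDbar g z := by
    funext z
    simp only [hf', ContinuousLinearMap.smul_apply, smul_eq_mul, wDbar]
    ring_nf
    simp [Complex.I_sq]
    ring
  have key := Complex.integral_boundary_rect_of_hasFDerivAt_real_off_countable
    (fun w => I * g w) f' 0 (1 + I) ∅ Set.countable_empty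
    ((continuous_const.mul hgC1.continuous).continuousOn)
    (fun x _ => hfderiv x)
    (by
      rw [hint_eq]
      exact ((continuous_const.mul hwc).continuousOn.integrableOn_compact
        (isCompact_reProdIm isCompact_uIcc isCompact_uIcc)))
  -- simplify the boundary terms
  have hre : (1 + I).re = 1 := by simp
  have him : (1 + I).im = 1 := by simp
  rw [hre, him] at key
  simp only [Complex.zero_re, Complex.zero_im, Complex.ofReal_zero, Complex.ofReal_one,
    zero_mul, add_zero, one_mul, zero_add] at key
  have hb1 : (∫ x : ℝ in (0:ℝ)..1, I * g x) = ∫ x : ℝ in (0:ℝ)..1, I * g (x + I) := by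
    refine intervalIntegral.integral_congr fun x _ => ?_
    rw [gperI x]
  have hb2 : (∫ y : ℝ in (0:ℝ)..1, I * g (1 + y * I)) = ∫ y : ℝ in (0:ℝ)..1, I * g (y * I) := by
    refine intervalIntegral.integral_congr fun y _ => ?_
    rw [add_comm, gper1]
  rw [hb1, hb2, sub_self, zero_add, sub_self] at key
  -- conclude the first statement
  have hiter : (∫ x : ℝ in (0:ℝ)..1, ∫ y : ℝ in (0:ℝ)..1,
      (I • f' (x + y * I) 1 - f' (x + y * I) I)) =
      (-2 : ℂ) * ∫ z in F, wDbar g z := by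
    calc (∫ x : ℝ in (0:ℝ)..1, ∫ y : ℝ in (0:ℝ)..1,
        (I • f' (x + y * I) 1 - f' (x + y * I) I))
        = ∫ x : ℝ in (0:ℝ)..1, ∫ y : ℝ in (0:ℝ)..1, (-2 : ℂ) * wDbar g (x + y * I) := by
          refine intervalIntegral.integral_congr fun x _ => ?_
          refine intervalIntegral.integral_congr fun y _ => ?_
          exact congrFun hint_eq _
      _ = ∫ z in {z : ℂ | z.re ∈ Set.Ioo (0 : ℝ) 1 ∧ z.im ∈ Set.Ioo (0 : ℝ) 1},
            (-2 : ℂ) * wDbar g z :=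
          (sq_integral (fun z => (-2 : ℂ) * wDbar g z) (continuous_const.mul hwc)).symm
      _ = (-2 : ℂ) * ∫ z in F, wDbar g z := by
          rw [hF, MeasureTheory.integral_const_mul]
  rw [hiter] at key
  have hfirst : (∫ z in F, wDbar g z) = 0 := by
    have h2 : (-2 : ℂ) * ∫ z in F, wDbar g z = 0 := key.symm
    exact (mul_eq_zero.mp h2).resolve_left (by norm_num)
  refine ⟨hfirst, ?_⟩
  -- second statement: take imaginary parts
  have him_eq : ∀ z, (‖ψ2 z‖ ^ 4 - ‖ψ1 z‖ ^ 4)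
      = 4 * (wDbar g z).im := by
    intro z
    rw [hdbar z]
    simp [Complex.add_im, Complex.ofReal_im, Complex.mul_im, Complex.mul_re,
      ← Complex.ofReal_pow]
  have hInt : IntegrableOn (wDbar g) F := by
    rw [hF]
    have : IsCompact (Set.Icc (0:ℝ) 1 ×ℂ Set.Icc (0:ℝ) 1) :=
      isCompact_reProdIm isCompact_Icc isCompact_Icc
    refine (hwc.continuousOn.integrableOn_compact this).mono_set fun z hz => ?_
    exact ⟨Set.Ioo_subset_Icc_self hz.1, Set.Ioo_subset_Icc_self hz.2⟩
  calc (∫ z in F, (‖ψ2 z‖ ^ 4 - ‖ψ1 z‖ ^ 4))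
      = ∫ z in F, 4 * (wDbar g z).im := by
        exact integral_congr_ae (Filter.Eventually.of_forall fun z => him_eq z)
    _ = 4 * ∫ z in F, (wDbar g z).im := by rw [MeasureTheory.integral_const_mul]
    _ = 4 * (∫ z in F, wDbar g z).im := by
        have h := integral_im (μ := volume.restrict F) hInt
        congr 1
    _ = 0 := by rw [hfirst]; simp
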